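/- The tensor of opponent games preserves strategy existence: for opponent games O and O', the game O ⊗ O' has a strategy if and only if both O and O' have strategies. -/
import Mathlib


/-- Rose trees: the unlabeled shape of a game tree. -/
inductive RTree : Type where
  | node : List RTree → RTree

mutual
/-- An opponent game: a finite list of player games (its children). -/
inductive OGame : Type where
  | mk : List PGame → OGame
/-- A player game: a finite list of opponent games (its children). -/
inductive PGame : Type where
  | mk : List OGame → PGame
end

mutual
/-- The dual of an opponent game. -/
def OGame.dual : OGame → PGame
  | .mk ps => .mk (ps.attach.map fun ⟨p, _⟩ => p.dual)
/-- The dual of a player game. -/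
def PGame.dual : PGame → OGame
  | .mk os => .mk (os.attach.map fun ⟨o, _⟩ => o.dual)
end

mutual
/-- Strategy existence in an opponent game: a conjunction over children. -/
def OGame.strat : OGame → Bool
  | .mk ps => ps.attach.all fun ⟨p, _⟩ => p.strat
/-- Strategy existence in a player game: a disjunction over children. -/
def PGame.strat : PGame → Bool
  | .mk os => os.attach.any fun ⟨o, _⟩ => o.strat
end

mutual
/-- Tensor of opponent games: `O ⊗ O' = (P_i ⊗ˡ O', O ⊗ʳ P'_k | …)`. -/
def otimes : OGame → OGame → OGame
  | .mk ps, .mk qs => .mk ((ps.attach.map fun ⟨p, _⟩ => oxl p (.mk qs)) ++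
      (qs.attach.map fun ⟨q, _⟩ => oxr (.mk ps) q))
  termination_by o o' => sizeOf o + sizeOf o'
  decreasing_by
  · have := List.sizeOf_lt_of_mem ‹p ∈ ps›; simp_all; omega
  · have := List.sizeOf_lt_of_mem ‹q ∈ qs›; simp_all; omega
/-- Mixed tensor `O ⊗ʳ P = {O ⊗ O_j | j ∈ J}`. -/
def oxr : OGame → PGame → PGame
  | o, .mk os => .mk (os.attach.map fun ⟨oj, _⟩ => otimes o oj)
  termination_by o p => sizeOf o + sizeOf p
  decreasing_by
  · have := List.sizeOf_lt_of_mem ‹oj ∈ os›; simp_all; omega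
/-- Mixed tensor `P ⊗ˡ O = {O_j ⊗ O | j ∈ J}`. -/
def oxl : PGame → OGame → PGame
  | .mk os, o => .mk (os.attach.map fun ⟨oj, _⟩ => otimes oj o)
  termination_by p o => sizeOf p + sizeOf o
  decreasing_by
  · have := List.sizeOf_lt_of_mem ‹oj ∈ os›; simp_all; omega
end

mutual
/-- Par of player games: `P ⅋ P' = {O_j ⅋ˡ P', P ⅋ʳ O'_k | …}`. -/
def parr : PGame → PGame → PGame
  | .mk os, .mk qs => .mk ((os.attach.map fun ⟨o, _⟩ => parrOP o (.mk qs)) ++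
      (qs.attach.map fun ⟨q, _⟩ => parrPO (.mk os) q))
  termination_by p p' => sizeOf p + sizeOf p'
  decreasing_by
  · have := List.sizeOf_lt_of_mem ‹o ∈ os›; simp_all; omega
  · have := List.sizeOf_lt_of_mem ‹q ∈ qs›; simp_all; omega
/-- Mixed par `P ⅋ʳ O = (P ⅋ P_i | i ∈ I)`. -/
def parrPO : PGame → OGame → OGame
  | p, .mk ps => .mk (ps.attach.map fun ⟨pi, _⟩ => parr p pi)
  termination_by p o => sizeOf p + sizeOf o
  decreasing_by
  · have := List.sizeOf_lt_of_mem ‹pi ∈ ps›; simp_all; omega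
/-- Mixed par `O ⅋ˡ P = (P_i ⅋ P | i ∈ I)`. -/
def parrOP : OGame → PGame → OGame
  | .mk ps, p => .mk (ps.attach.map fun ⟨pi, _⟩ => parr pi p)
  termination_by o p => sizeOf o + sizeOf p
  decreasing_by
  · have := List.sizeOf_lt_of_mem ‹pi ∈ ps›; simp_all; omega
end

mutual
/-- The exponential `!O`: `!() = ()` and `!O = ⊗_{i∈I} (b_i : !'P_i)` for `I ≠ ∅`. -/
def bang : OGame → OGame
  | .mk [] => .mk []
  | .mk (p :: ps) =>
      (ps.attach.map fun ⟨q, _⟩ => OGame.mk [bang' q]).foldl otimes (OGame.mk [bang' p])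
/-- The auxiliary exponential `!'{a_j : O_j} = {a_j : !O_j}`. -/
def bang' : PGame → PGame
  | .mk os => .mk (os.attach.map fun ⟨o, _⟩ => bang o)
end

mutual
/-- Underlying unlabeled tree of an opponent game. -/
def OGame.toTree : OGame → RTree
  | .mk ps => .node (ps.attach.map fun ⟨p, _⟩ => p.toTree)
/-- Underlying unlabeled tree of a player game. -/
def PGame.toTree : PGame → RTree
  | .mk os => .node (os.attach.map fun ⟨o, _⟩ => o.toTree)
end

/-- Number of nodes (including the root). -/
def RTree.nodes : RTree → ℕ
  | .node cs => 1 + (cs.attach.map fun ⟨c, _⟩ => c.nodes).sum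

/-- Number of parent-child edges. -/
def RTree.edges : RTree → ℕ
  | .node cs => cs.length + (cs.attach.map fun ⟨c, _⟩ => c.edges).sum

/-- Number of leaves. -/
def RTree.leaves : RTree → ℕ
  | .node [] => 1
  | .node cs => (cs.attach.map fun ⟨c, _⟩ => c.leaves).sum

/-- Uniform size: `u[leaf] = 0`, `u[node with n children] = (n-1) + Σ u[child]`. -/
def RTree.usize : RTree → ℕ
  | .node [] => 0
  | .node cs => (cs.length - 1) + (cs.attach.map fun ⟨c, _⟩ => c.usize).sum

/-- Depth: leaves have depth 0. -/
def RTree.depth : RTree → ℕ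
  | .node cs => (cs.attach.map fun ⟨c, _⟩ => c.depth + 1).foldr max 0

/-- `profile t k` is the number of nodes of `t` at depth `k`. -/
def RTree.profile : RTree → ℕ → ℕ
  | _, 0 => 1
  | .node cs, k + 1 => (cs.attach.map fun ⟨c, _⟩ => c.profile k).sum

mutual
/-- Number of player nodes of an opponent game. -/
def OGame.pnodes : OGame → ℕ
  | .mk ps => (ps.attach.map fun ⟨p, _⟩ => p.pnodes).sum
/-- Number of player nodes of a player game (the root counts). -/
def PGame.pnodes : PGame → ℕ
  | .mk os => 1 + (os.attach.map fun ⟨o, _⟩ => o.pnodes).sum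
end

mutual
/-- Number of edges leaving opponent nodes, for an opponent game. -/
def OGame.eo : OGame → ℕ
  | .mk ps => ps.length + (ps.attach.map fun ⟨p, _⟩ => p.eo).sum
/-- Number of edges leaving opponent nodes, for a player game. -/
def PGame.eo : PGame → ℕ
  | .mk os => (os.attach.map fun ⟨o, _⟩ => o.eo).sum
end

mutual
/-- Number of edges leaving player nodes, for an opponent game. -/
def OGame.ep : OGame → ℕ
  | .mk ps => (ps.attach.map fun ⟨p, _⟩ => p.ep).sum
/-- Number of edges leaving player nodes, for a player game. -/
def PGame.ep : PGame → ℕ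
  | .mk os => os.length + (os.attach.map fun ⟨o, _⟩ => o.ep).sum
end

/-- `γ(i,j) = 1` if `i` or `j` is zero or even, else `0`. -/
def gammaCoef (i j : ℕ) : ℕ :=
  if i = 0 ∨ j = 0 ∨ i % 2 = 0 ∨ j % 2 = 0 then 1 else 0

mutual
/-- The single-branch player chain `L_n`. -/
def Lp : ℕ → PGame
  | 0 => .mk []
  | n + 1 => .mk [Lo n]
/-- The single-branch opponent chain `L'_n`. -/
def Lo : ℕ → OGame
  | 0 => .mk []
  | n + 1 => .mk [Lp n]
end

lemma OGame.strat_mk (ps : List PGame) :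
    (OGame.mk ps).strat = true ↔ ∀ p ∈ ps, p.strat = true := by
  simp [OGame.strat, List.all_eq_true]

lemma PGame.strat_mk (os : List OGame) :
    (PGame.mk os).strat = true ↔ ∃ o ∈ os, o.strat = true := by
  simp [PGame.strat, List.any_eq_true]

lemma main_strat : ∀ n O O', sizeOf O + sizeOf O' ≤ n →
    ((otimes O O').strat = true ↔ (O.strat = true ∧ O'.strat = true)) := by
  intro n
  induction n with
  | zero => intro O O' h; cases O; simp at h
  | succ n ih =>
    rintro ⟨ps⟩ ⟨qs⟩ h
    have hsp : sizeOf (OGame.mk ps) = 1 + sizeOf ps := by simp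
    have hsq : sizeOf (OGame.mk qs) = 1 + sizeOf qs := by simp
    have hL : ∀ p ∈ ps, ((oxl p (OGame.mk qs)).strat = true ↔
        (p.strat = true ∧ (OGame.mk qs).strat = true)) := by
      rintro ⟨os⟩ hp
      have hps : sizeOf (PGame.mk os) < sizeOf ps := List.sizeOf_lt_of_mem hp
      have hos : sizeOf (PGame.mk os) = 1 + sizeOf os := by simp
      rw [oxl, PGame.strat_mk, PGame.strat_mk]
      simp only [List.mem_map, List.mem_attach, true_and, Subtype.exists, exists_prop]
      constructor
      · rintro ⟨x, ⟨oj, hoj, rfl⟩, hx⟩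
        have hsz : sizeOf oj < sizeOf os := List.sizeOf_lt_of_mem hoj
        have := (ih oj (OGame.mk qs) (by omega)).mp hx
        exact ⟨⟨oj, hoj, this.1⟩, this.2⟩
      · rintro ⟨⟨oj, hoj, hoj'⟩, hq⟩
        have hsz : sizeOf oj < sizeOf os := List.sizeOf_lt_of_mem hoj
        exact ⟨otimes oj (OGame.mk qs), ⟨oj, hoj, rfl⟩,
          (ih oj (OGame.mk qs) (by omega)).mpr ⟨hoj', hq⟩⟩
    have hR : ∀ q ∈ qs, ((oxr (OGame.mk ps) q).strat = true ↔
        ((OGame.mk ps).strat = true ∧ q.strat = true)) := by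
      rintro ⟨os⟩ hq
      have hqs : sizeOf (PGame.mk os) < sizeOf qs := List.sizeOf_lt_of_mem hq
      have hos : sizeOf (PGame.mk os) = 1 + sizeOf os := by simp
      rw [oxr, PGame.strat_mk, PGame.strat_mk]
      simp only [List.mem_map, List.mem_attach, true_and, Subtype.exists, exists_prop]
      constructor
      · rintro ⟨x, ⟨oj, hoj, rfl⟩, hx⟩
        have hsz : sizeOf oj < sizeOf os := List.sizeOf_lt_of_mem hoj
        have := (ih (OGame.mk ps) oj (by omega)).mp hx
        exact ⟨this.1, ⟨oj, hoj, this.2⟩⟩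
      · rintro ⟨hp, ⟨oj, hoj, hoj'⟩⟩
        have hsz : sizeOf oj < sizeOf os := List.sizeOf_lt_of_mem hoj
        exact ⟨otimes (OGame.mk ps) oj, ⟨oj, hoj, rfl⟩,
          (ih (OGame.mk ps) oj (by omega)).mpr ⟨hp, hoj'⟩⟩
    rw [otimes, OGame.strat_mk]
    simp only [List.mem_append, List.mem_map, List.mem_attach, true_and, Subtype.exists,
      exists_prop]
    constructor
    · intro hall
      constructor
      · rw [OGame.strat_mk]
        intro p hp
        exact ((hL p hp).mp (hall _ (Or.inl ⟨p, hp, rfl⟩))).1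
      · rw [OGame.strat_mk]
        intro q hq
        exact ((hR q hq).mp (hall _ (Or.inr ⟨q, hq, rfl⟩))).2
    · rintro ⟨hP, hQ⟩ x hx
      rcases hx with ⟨p, hp, rfl⟩ | ⟨q, hq, rfl⟩
      · exact (hL p hp).mpr ⟨(OGame.strat_mk ps).mp hP p hp, hQ⟩
      · exact (hR q hq).mpr ⟨hP, (OGame.strat_mk qs).mp hQ q hq⟩

/-- O ⊗ O' has a strategy iff both O and O' have strategies. -/
theorem otimes_strat (O O' : OGame) :
    (otimes O O').strat = true ↔ (O.strat = true ∧ O'.strat = true) :=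
  main_strat _ O O' le_rfl
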